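/- Combined statement (Mirsky + signature): for every l ≥ 1 and every m with 1 ≤ m ≤ 2l−1, there exists a real symmetric 2l×2l matrix G whose diagonal is (1,…,1,−1,…,−1) (l ones followed by l minus ones) and which has exactly m positive eigenvalues and 2l−m negative eigenvalues (counted with multiplicity), all nonzero. -/

import Mathlib

open Matrix Finset Polynomial

variable {n : Type*} [Fintype n] [DecidableEq n]

lemma my_eval_charpoly (M : Matrix n n ℝ) (x : ℝ) :
    M.charpoly.eval x = (Matrix.diagonal (fun _ => x) - M).det := by
  rw [Matrix.charpoly, ← coe_evalRingHom, RingHom.map_det]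
  congr 1
  ext i j
  by_cases h : i = j
  · subst h; simp [charmatrix_apply_eq]
  · simp [charmatrix_apply_ne _ _ _ h, Matrix.diagonal_apply_ne _ h]

lemma my_charpoly_diagonal (v : n → ℝ) :
    (Matrix.diagonal v).charpoly = ∏ i, (X - C (v i)) := by
  have h : charmatrix (Matrix.diagonal v) = Matrix.diagonal (fun i => X - C (v i)) := by
    ext i j
    by_cases h : i = j
    · subst h; simp [charmatrix_apply_eq]
    · simp [charmatrix_apply_ne _ _ _ h, Matrix.diagonal_apply_ne _ h]
  rw [Matrix.charpoly, h, Matrix.det_diagonal]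

lemma my_charpoly_hermitian {M : Matrix n n ℝ} (hM : M.IsHermitian) :
    M.charpoly = ∏ i, (X - C (hM.eigenvalues i)) := by
  rw [← my_charpoly_diagonal]
  apply Polynomial.funext
  intro x
  rw [my_eval_charpoly, my_eval_charpoly]
  set U : Matrix n n ℝ := (Matrix.IsHermitian.eigenvectorUnitary hM : Matrix n n ℝ)
  have hU1 : star U * U = 1 := (Matrix.mem_unitaryGroup_iff').mp
    (Matrix.IsHermitian.eigenvectorUnitary hM).2
  have hU2 : U * star U = 1 := (Matrix.mem_unitaryGroup_iff).mp
    (Matrix.IsHermitian.eigenvectorUnitary hM).2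
  have hspec : M = U * Matrix.diagonal hM.eigenvalues * star U := by
    have := Matrix.IsHermitian.spectral_theorem hM
    simpa [RCLike.ofReal_real_eq_id, Function.comp] using this
  have hdiag : Matrix.diagonal (fun _ : n => x) - M
      = U * (Matrix.diagonal (fun _ : n => x) - Matrix.diagonal hM.eigenvalues) * star U := by
    rw [Matrix.mul_sub, Matrix.sub_mul, ← hspec]
    congr 1
    have : (Matrix.diagonal (fun _ : n => x)) = (x : ℝ) • (1 : Matrix n n ℝ) := by
      simp [Matrix.smul_one_eq_diagonal]
    rw [this, Matrix.mul_smul, mul_one, Matrix.smul_mul, hU2]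
  rw [hdiag, Matrix.det_mul, Matrix.det_mul]
  have : U.det * (star U).det = 1 := by
    rw [← Matrix.det_mul, hU2, Matrix.det_one]
  calc U.det * (Matrix.diagonal (fun _ : n => x) - Matrix.diagonal hM.eigenvalues).det * (star U).det
      = (U.det * (star U).det) * (Matrix.diagonal (fun _ : n => x) - Matrix.diagonal hM.eigenvalues).det := by ring
    _ = _ := by rw [this, one_mul]

lemma my_eig_multiset {M : Matrix n n ℝ} (hM : M.IsHermitian) (d : n → ℝ)
    (h : M.charpoly = ∏ i, (X - C (d i))) :
    Multiset.map hM.eigenvalues Finset.univ.val = Multiset.map d Finset.univ.val := by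
  have h2 : ∏ i, (X - C (hM.eigenvalues i)) = ∏ i, (X - C (d i)) := by
    rw [← my_charpoly_hermitian hM, h]
  have key : ∀ f : n → ℝ, (∏ i, (X - C (f i)))
      = ((Multiset.map f Finset.univ.val).map (fun a => X - C a)).prod := by
    intro f
    rw [Multiset.map_map]
    rfl
  have := congrArg Polynomial.roots h2
  rwa [key hM.eigenvalues, key d, Polynomial.roots_multiset_prod_X_sub_C,
    Polynomial.roots_multiset_prod_X_sub_C] at this

lemma my_key (N : ℕ) (ε : Fin N → ℝ) (σ : ℝ)
    (S : Finset (Fin N)) (i₀ : Fin N) (hi₀ : i₀ ∈ S)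
    (hε : ∀ i ∈ S, ε i = σ) (d : Fin N → ℝ)
    (hd0 : d i₀ = σ * (2 * S.card - 1))
    (hdS : ∀ i ∈ S, i ≠ i₀ → d i = -σ)
    (hdc : ∀ i ∉ S, d i = ε i) :
    ∃ (G : Matrix (Fin N) (Fin N) ℝ) (hG : G.IsHermitian),
      (∀ i, G i i = ε i) ∧
      Multiset.map hG.eigenvalues Finset.univ.val = Multiset.map d Finset.univ.val := by
  classical
  set k := S.card with hk
  have hk1 : 1 ≤ k := Finset.card_pos.mpr ⟨i₀, hi₀⟩
  set G : Matrix (Fin N) (Fin N) ℝ :=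
    Matrix.of (fun i j => if i = j then ε i else if i ∈ S ∧ j ∈ S then 2*σ else 0) with hGdef
  have hGdiag : ∀ i, G i i = ε i := by intro i; simp [hGdef]
  have hGoff : ∀ i j, i ≠ j → G i j = if i ∈ S ∧ j ∈ S then 2*σ else 0 := by
    intro i j h; simp [hGdef, h]
  have hG : G.IsHermitian := by
    unfold Matrix.IsHermitian
    ext i j
    simp only [Matrix.conjTranspose_apply, star_trivial]
    by_cases h : i = j
    · subst h; rfl
    · have h' : ¬ (j = i) := fun hh => h hh.symm
      rw [hGoff i j h, hGoff j i h']
      by_cases hiS : i ∈ S <;> by_cases hjS : j ∈ S <;> simp [hiS, hjS]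
  set ε' : Fin N → ℝ := fun i => if i ∈ S then -σ else ε i with hε'
  -- determinant formula at good points
  have hdet : ∀ x : ℝ, (∀ i, x ≠ ε' i) →
      (Matrix.diagonal (fun _ : Fin N => x) - G).det = ∏ i, (x - d i) := by
    intro x hx
    have hxσ : x + σ ≠ 0 := by
      have := hx i₀
      simp only [hε', hi₀, if_pos] at this
      intro h; apply this; linarith
    set dx : Fin N → ℝ := fun i => x - ε' i with hdx
    have hdxne : ∀ i, dx i ≠ 0 := fun i h => (hx i) (by simpa [hdx] using sub_eq_zero.mp h)
    set u : Fin N → ℝ := fun i => if i ∈ S then 1 else 0 with hu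
    set w : Fin N → ℝ := fun i => (-2*σ / dx i) * u i with hw
    have hdw : ∀ i j, dx i * (w i * u j) = -2*σ * (u i * u j) := by
      intro i j
      have h1 : dx i ≠ 0 := hdxne i
      rw [hw]
      field_simp
    have hmat : Matrix.diagonal (fun _ : Fin N => x) - G
        = Matrix.diagonal dx * (1 + Matrix.replicateCol Unit w * Matrix.replicateRow Unit u) := by
      ext i j
      rw [Matrix.diagonal_mul]
      have hcr : (Matrix.replicateCol Unit w * Matrix.replicateRow Unit u) i j = w i * u j := by
        simp [Matrix.mul_apply]
      by_cases h : i = j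
      · subst h
        simp only [Matrix.sub_apply, Matrix.diagonal_apply_eq, Matrix.add_apply,
          Matrix.one_apply_eq, hcr, hGdiag i]
        rw [mul_add, mul_one, hdw i i]
        by_cases hiS : i ∈ S
        · simp only [hu, if_pos hiS, hdx, hε', if_pos hiS, hε i hiS]
          ring
        · simp only [hu, if_neg hiS, hdx, hε', if_neg hiS]
          ring
      · simp only [Matrix.sub_apply, Matrix.diagonal_apply_ne _ h, Matrix.add_apply,
          Matrix.one_apply_ne h, hcr, hGoff i j h]
        rw [mul_add, hdw i j]
        by_cases hiS : i ∈ S <;> by_cases hjS : j ∈ S <;>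
          simp [hu, hiS, hjS] <;> ring
    rw [hmat, Matrix.det_mul, Matrix.det_diagonal, Matrix.det_one_add_replicateCol_mul_replicateRow]
    have hsum : u ⬝ᵥ w = k * (-2*σ / (x + σ)) := by
      have huw : ∀ i, u i * w i = if i ∈ S then -2*σ / (x + σ) else 0 := by
        intro i
        by_cases hiS : i ∈ S
        · simp only [hu, hw, if_pos hiS, hdx, hε', if_pos hiS]
          rw [sub_neg_eq_add]
          ring
        · simp [hu, hw, if_neg hiS]
      simp only [dotProduct, huw, Finset.sum_ite_mem, Finset.univ_inter,
        Finset.sum_const, ← hk, nsmul_eq_mul]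
    have hprod : ∏ i, dx i = (x + σ)^k * ∏ i ∈ Sᶜ, (x - ε i) := by
      rw [← Finset.prod_mul_prod_compl S dx]
      congr 1
      · have h1 : ∏ i ∈ S, dx i = ∏ _i ∈ S, (x + σ) :=
          Finset.prod_congr rfl (fun i hiS => by
            simp only [hdx, hε', if_pos hiS, sub_neg_eq_add])
        rw [h1, Finset.prod_const, hk]
      · exact Finset.prod_congr rfl (fun i hiS => by
          simp only [hdx, hε', if_neg (Finset.mem_compl.mp hiS)])
    have hprodd : ∏ i, (x - d i)
        = ((x - σ * (2*k - 1)) * (x + σ)^(k-1)) * ∏ i ∈ Sᶜ, (x - ε i) := by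
      rw [← Finset.prod_mul_prod_compl S (fun i => x - d i)]
      congr 1
      · rw [← Finset.mul_prod_erase S _ hi₀, hd0]
        congr 1
        have h1 : ∏ i ∈ S.erase i₀, (x - d i) = ∏ _i ∈ S.erase i₀, (x + σ) :=
          Finset.prod_congr rfl (fun i hi => by
            rw [hdS i (Finset.mem_of_mem_erase hi) (Finset.ne_of_mem_erase hi), sub_neg_eq_add])
        rw [h1, Finset.prod_const, Finset.card_erase_of_mem hi₀, hk]
      · exact Finset.prod_congr rfl (fun i hiS => by
          rw [hdc i (Finset.mem_compl.mp hiS)])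
    rw [hprod, hprodd, hsum]
    have hkpow : (x + σ)^k = (x + σ)^(k-1) * (x + σ) := by
      conv_lhs => rw [show k = (k-1) + 1 by omega]
      rw [pow_succ]
    rw [hkpow]
    have hfact : (x + σ) * (1 + ↑k * (-2*σ / (x + σ))) = x - σ * (2*k - 1) := by
      field_simp
      ring
    calc (x + σ)^(k-1) * (x + σ) * (∏ i ∈ Sᶜ, (x - ε i)) * (1 + ↑k * (-2*σ / (x + σ)))
        = (x + σ)^(k-1) * ((x + σ) * (1 + ↑k * (-2*σ / (x + σ)))) * ∏ i ∈ Sᶜ, (x - ε i) := by ring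
      _ = _ := by rw [hfact]; ring
  -- charpoly identity
  have hcp : G.charpoly = ∏ i, (X - C (d i)) := by
    have hq : G.charpoly - ∏ i, (X - C (d i)) = 0 := by
      apply Polynomial.eq_zero_of_infinite_isRoot
      apply Set.Infinite.mono (s := (Set.range ε')ᶜ)
      · intro x hx
        simp only [Set.mem_compl_iff, Set.mem_range, not_exists] at hx
        have hx' : ∀ i, x ≠ ε' i := fun i h => hx i h.symm
        simp only [Set.mem_setOf_eq, Polynomial.IsRoot, Polynomial.eval_sub,
          Polynomial.eval_prod, Polynomial.eval_sub, Polynomial.eval_X, Polynomial.eval_C]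
        rw [my_eval_charpoly, hdet x hx', sub_self]
      · exact Set.Finite.infinite_compl (Set.finite_range ε')
    exact sub_eq_zero.mp hq
  exact ⟨G, hG, hGdiag, my_eig_multiset hG d hcp⟩

lemma my_count (N : ℕ) (e d : Fin N → ℝ)
    (h : Multiset.map e Finset.univ.val = Multiset.map d Finset.univ.val)
    (p : ℝ → Prop) [DecidablePred p] :
    (Finset.univ.filter (fun i => p (e i))).card
      = (Finset.univ.filter (fun i => p (d i))).card := by
  have h1 : ∀ f : Fin N → ℝ, (Finset.univ.filter (fun i => p (f i))).card
      = Multiset.countP p (Multiset.map f Finset.univ.val) := by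
    intro f
    rw [Multiset.countP_map]
    rfl
  rw [h1, h1, h]

lemma my_card_eq (N : ℕ) (P : Fin N → Prop) [DecidablePred P] (q : ℕ → Prop) [DecidablePred q]
    (h : ∀ j : Fin N, P j ↔ q j.val) (c : ℕ)
    (hc : ((Finset.range N).filter q).card = c) :
    (Finset.univ.filter P).card = c := by
  rw [← hc, Finset.card_filter, Finset.card_filter,
    ← Fin.sum_univ_eq_sum_range (fun j => if q j then 1 else 0)]
  exact Finset.sum_congr rfl (fun i _ => by simp [h i])


theorem exists_signature_matrix (l m : ℕ) (hl : 1 ≤ l) (hm : 1 ≤ m)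
    (hm' : m ≤ 2 * l - 1) :
    ∃ (G : Matrix (Fin (2 * l)) (Fin (2 * l)) ℝ) (hG : G.IsHermitian),
      (∀ i : Fin (2 * l), G i i = if (i : ℕ) < l then 1 else -1) ∧
      (Finset.univ.filter (fun i => 0 < hG.eigenvalues i)).card = m ∧
      (Finset.univ.filter (fun i => hG.eigenvalues i < 0)).card = 2 * l - m ∧
      ∀ i, hG.eigenvalues i ≠ 0 := by
  classical
  set N := 2 * l with hN
  set ε : Fin N → ℝ := fun i => if (i : ℕ) < l then 1 else -1 with hεdef
  by_cases hcase : m ≤ l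
  · -- σ = 1
    set k := l - m + 1 with hkdef
    have hk1 : 1 ≤ k := by omega
    have hkl : k ≤ l := by omega
    set S : Finset (Fin N) := Finset.univ.filter (fun i => (i : ℕ) < k) with hS
    have hScard : S.card = k := by
      rw [hS]
      apply my_card_eq N _ (fun j => j < k) (fun j => Iff.rfl)
      have h1 : (Finset.range N).filter (fun j => j < k) = Finset.range k := by
        ext j; simp only [Finset.mem_filter, Finset.mem_range]; omega
      rw [h1, Finset.card_range]
    have hi₀lt : 0 < N := by omega
    set i₀ : Fin N := ⟨0, hi₀lt⟩ with hi₀def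
    have hi₀ : i₀ ∈ S := by simp [hS, hi₀def, hk1]; omega
    set d : Fin N → ℝ := fun i =>
      if (i : ℕ) = 0 then 2 * (k : ℝ) - 1 else
      if (i : ℕ) < k then -1 else if (i : ℕ) < l then 1 else -1 with hddef
    have hkR : (1 : ℝ) ≤ (k : ℝ) := by exact_mod_cast hk1
    obtain ⟨G, hG, hdiag, hmul⟩ := my_key N ε 1 S i₀ hi₀
      (fun i hiS => by
        have h1 : (i : ℕ) < k := by simpa [hS] using hiS
        simp [hεdef, lt_of_lt_of_le h1 hkl])
      d
      (by simp [hddef, hi₀def, hScard])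
      (fun i hiS hne => by
        have h1 : (i : ℕ) < k := by simpa [hS] using hiS
        have h2 : (i : ℕ) ≠ 0 := fun h0 => hne (Fin.ext h0)
        simp [hddef, h2, h1])
      (fun i hiS => by
        have h1 : ¬ (i : ℕ) < k := by simpa [hS] using hiS
        have h2 : (i : ℕ) ≠ 0 := by omega
        simp [hddef, hεdef, h2, h1])
    refine ⟨G, hG, hdiag, ?_, ?_, ?_⟩
    · rw [my_count N hG.eigenvalues d hmul (fun x => 0 < x)]
      apply my_card_eq N _ (fun j => j = 0 ∨ (k ≤ j ∧ j < l))
      · intro i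
        simp only [hddef]
        split_ifs with h1 h2 h3 <;> constructor <;> intro hh <;>
          first | omega | linarith | (norm_num at hh ⊢) | tauto
      · have h1 : (Finset.range N).filter (fun j => j = 0 ∨ (k ≤ j ∧ j < l))
            = insert 0 (Finset.Ico k l) := by
          ext j
          simp only [Finset.mem_filter, Finset.mem_range, Finset.mem_insert, Finset.mem_Ico, hN]
          omega
        rw [h1, Finset.card_insert_of_notMem (by simp only [Finset.mem_Ico]; omega),
          Nat.card_Ico]
        omega
    · rw [my_count N hG.eigenvalues d hmul (fun x => x < 0)]
      apply my_card_eq N _ (fun j => (j ≠ 0 ∧ j < k) ∨ l ≤ j)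
      · intro i
        simp only [hddef]
        split_ifs with h1 h2 h3 <;> constructor <;> intro hh <;>
          first | omega | linarith | (norm_num at hh ⊢) | tauto
      · have h1 : (Finset.range N).filter (fun j => (j ≠ 0 ∧ j < k) ∨ l ≤ j)
            = Finset.Ico 1 k ∪ Finset.Ico l (2 * l) := by
          ext j
          simp only [Finset.mem_filter, Finset.mem_range, Finset.mem_union, Finset.mem_Ico, hN]
          omega
        rw [h1, Finset.card_union_of_disjoint (by
          simp only [Finset.disjoint_left, Finset.mem_Ico]
          intro j hj hj2; omega), Nat.card_Ico, Nat.card_Ico]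
        omega
    · intro i
      have hmem : hG.eigenvalues i ∈ Multiset.map d Finset.univ.val := by
        rw [← hmul]
        exact Multiset.mem_map_of_mem _ (Finset.mem_univ i)
      obtain ⟨j, _, hj⟩ := Multiset.mem_map.mp hmem
      rw [← hj]
      simp only [hddef]
      split_ifs <;> first | linarith | norm_num
  · -- σ = -1
    push_neg at hcase
    have hm2 : m ≤ 2 * l - 1 := hm'
    set k := m - l + 1 with hkdef
    have hk1 : 2 ≤ k := by omega
    have hkl : k ≤ l := by omega
    set S : Finset (Fin N) := Finset.univ.filter (fun i => l ≤ (i : ℕ) ∧ (i : ℕ) < l + k) with hS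
    have hScard : S.card = k := by
      rw [hS]
      apply my_card_eq N _ (fun j => l ≤ j ∧ j < l + k) (fun j => Iff.rfl)
      have h1 : (Finset.range N).filter (fun j => l ≤ j ∧ j < l + k) = Finset.Ico l (l + k) := by
        ext j; simp only [Finset.mem_filter, Finset.mem_range, Finset.mem_Ico, hN]; omega
      rw [h1, Nat.card_Ico]
      omega
    have hi₀lt : l < N := by omega
    set i₀ : Fin N := ⟨l, hi₀lt⟩ with hi₀def
    have hi₀ : i₀ ∈ S := by
      simp only [hS, Finset.mem_filter, Finset.mem_univ, true_and, hi₀def]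
      omega
    set d : Fin N → ℝ := fun i =>
      if (i : ℕ) = l then -(2 * (k : ℝ) - 1) else
      if l ≤ (i : ℕ) ∧ (i : ℕ) < l + k then 1 else if (i : ℕ) < l then 1 else -1 with hddef
    have hkR : (2 : ℝ) ≤ (k : ℝ) := by exact_mod_cast hk1
    obtain ⟨G, hG, hdiag, hmul⟩ := my_key N ε (-1) S i₀ hi₀
      (fun i hiS => by
        have h1 : l ≤ (i : ℕ) ∧ (i : ℕ) < l + k := by simpa [hS] using hiS
        have h2 : ¬ (i : ℕ) < l := by omega
        simp [hεdef, h2])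
      d
      (by
        simp only [hddef, hi₀def, if_pos rfl, hScard]
        push_cast
        ring)
      (fun i hiS hne => by
        have h1 : l ≤ (i : ℕ) ∧ (i : ℕ) < l + k := by simpa [hS] using hiS
        have h2 : (i : ℕ) ≠ l := fun h0 => hne (Fin.ext h0)
        simp [hddef, h2, h1])
      (fun i hiS => by
        have h1 : ¬ (l ≤ (i : ℕ) ∧ (i : ℕ) < l + k) := by simpa [hS] using hiS
        have h2 : (i : ℕ) ≠ l := by omega
        simp only [hddef, hεdef, if_neg h2, if_neg h1])
    refine ⟨G, hG, hdiag, ?_, ?_, ?_⟩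
    · rw [my_count N hG.eigenvalues d hmul (fun x => 0 < x)]
      apply my_card_eq N _ (fun j => j < l ∨ (l + 1 ≤ j ∧ j < l + k))
      · intro i
        simp only [hddef]
        split_ifs with h1 h2 h3 <;> constructor <;> intro hh <;>
          first | omega | linarith | (norm_num at hh ⊢) | tauto
      · have h1 : (Finset.range N).filter (fun j => j < l ∨ (l + 1 ≤ j ∧ j < l + k))
            = Finset.range l ∪ Finset.Ico (l + 1) (l + k) := by
          ext j
          simp only [Finset.mem_filter, Finset.mem_range, Finset.mem_union, Finset.mem_Ico, hN]
          omega
        rw [h1, Finset.card_union_of_disjoint (by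
          simp only [Finset.disjoint_left, Finset.mem_range, Finset.mem_Ico]
          intro j hj hj2; omega), Nat.card_Ico, Finset.card_range]
        omega
    · rw [my_count N hG.eigenvalues d hmul (fun x => x < 0)]
      apply my_card_eq N _ (fun j => j = l ∨ l + k ≤ j)
      · intro i
        simp only [hddef]
        split_ifs with h1 h2 h3 <;> constructor <;> intro hh <;>
          first | omega | linarith | (norm_num at hh ⊢) | tauto
      · have h1 : (Finset.range N).filter (fun j => j = l ∨ l + k ≤ j)
            = insert l (Finset.Ico (l + k) (2 * l)) := by
          ext j
          simp only [Finset.mem_filter, Finset.mem_range, Finset.mem_insert, Finset.mem_Ico, hN]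
          omega
        rw [h1, Finset.card_insert_of_notMem (by
          simp only [Finset.mem_Ico]; omega), Nat.card_Ico]
        omega
    · intro i
      have hmem : hG.eigenvalues i ∈ Multiset.map d Finset.univ.val := by
        rw [← hmul]
        exact Multiset.mem_map_of_mem _ (Finset.mem_univ i)
      obtain ⟨j, _, hj⟩ := Multiset.mem_map.mp hmem
      rw [← hj]
      simp only [hddef]
      split_ifs <;> first | linarith | norm_num
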